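/- There exists a nondegenerate subcontinuum L of the Cantor fan F whose set of endpoints is dense in L; that is, a Lelek fan exists. -/

import Mathlib

/-- The equivalence relation on `(ℕ → Bool) × [0,1]` identifying two points iff they are
equal or both have second coordinate `0`. -/
def CantorFanSetoid : Setoid ((ℕ → Bool) × unitInterval) where
  r p q := p = q ∨ (p.2 = 0 ∧ q.2 = 0)
  iseqv := by
    constructor
    · intro p; exact Or.inl rfl
    · rintro p q (h | h)
      · exact Or.inl h.symm
      · exact Or.inr ⟨h.2, h.1⟩
    · rintro p q r (h | h) (h' | h')
      · exact Or.inl (h.trans h')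
      · exact Or.inr ⟨by rw [h]; exact h'.1, h'.2⟩
      · exact Or.inr ⟨h.1, by rw [← h']; exact h.2⟩
      · exact Or.inr ⟨h.1, h'.2⟩

/-- The Cantor fan: the cone over the Cantor set `{0,1}^ℕ`, i.e. the quotient of
`{0,1}^ℕ × [0,1]` collapsing `{0,1}^ℕ × {0}` to a point. -/
def CantorFan : Type := Quotient CantorFanSetoid

instance : TopologicalSpace CantorFan := instTopologicalSpaceQuotient

/-- The top `v` of the Cantor fan. -/
def fanTop : CantorFan := Quotient.mk CantorFanSetoid (fun _ => false, 0)

/-- `e` is an endpoint of `X ⊆ CantorFan` if `e ∈ X` and for every arc contained in `X`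
and containing `e`, the point `e` is an endpoint of that arc. -/
def IsEndpoint (X : Set CantorFan) (e : CantorFan) : Prop :=
  e ∈ X ∧ ∀ h : unitInterval → CantorFan, Topology.IsEmbedding h →
    Set.range h ⊆ X → e ∈ Set.range h → e = h 0 ∨ e = h 1

/-- A Lelek fan: a nondegenerate subcontinuum of the Cantor fan whose set of endpoints
is dense in it. -/
def IsLelekFan (L : Set CantorFan) : Prop :=
  L.Nontrivial ∧ IsCompact L ∧ IsConnected L ∧ L ⊆ closure {e | IsEndpoint L e}

open Set Topology

noncomputable section
namespace LelekAux

def w (k : ℕ) : ℝ := 1 / (k + 1)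

lemma w_pos (k : ℕ) : 0 < w k := by unfold w; positivity

lemma w_antitone {m n : ℕ} (h : m ≤ n) : w n ≤ w m := by
  unfold w
  have h1 : (0:ℝ) < m + 1 := by positivity
  apply one_div_le_one_div_of_le h1
  exact_mod_cast by omega

def P (n : ℕ) (a : ℕ → Bool) : ℝ := ∑ k ∈ Finset.range n, if a k then w k else 0

lemma P_nonneg (n : ℕ) (a : ℕ → Bool) : 0 ≤ P n a := by
  apply Finset.sum_nonneg
  intro k _
  split <;> [exact (w_pos k).le; rfl]

lemma P_mono (a : ℕ → Bool) {m n : ℕ} (h : m ≤ n) : P m a ≤ P n a := by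
  apply Finset.sum_le_sum_of_subset_of_nonneg (Finset.range_subset_range.2 h)
  intro k _ _
  split <;> [exact (w_pos k).le; rfl]

lemma continuous_P (n : ℕ) : Continuous (P n) := by
  apply continuous_finset_sum
  intro k _
  exact (continuous_of_discreteTopology (f := fun b : Bool => if b then w k else 0)).comp
    (continuous_apply k)

/-- agreement of partial sums when the functions agree below `n` -/
lemma P_congr {a b : ℕ → Bool} {n : ℕ} (h : ∀ k < n, a k = b k) : P n a = P n b := by
  unfold P
  apply Finset.sum_congr rfl
  intro k hk
  rw [h k (Finset.mem_range.1 hk)]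

def K : Set ((ℕ → Bool) × unitInterval) :=
  {p | ∀ n, (p.2 : ℝ) * (1 + P n p.1) ≤ 1}

def mkF : ((ℕ → Bool) × unitInterval) → CantorFan := Quotient.mk CantorFanSetoid

def L : Set CantorFan := mkF '' K

lemma continuous_mkF : Continuous mkF := continuous_quotient_mk'

lemma isClosed_K : IsClosed K := by
  have : K = ⋂ n, {p : (ℕ → Bool) × unitInterval | (p.2 : ℝ) * (1 + P n p.1) ≤ 1} := by
    ext p; simp [K, Set.mem_iInter]
  rw [this]
  refine isClosed_iInter fun n => isClosed_le ?_ continuous_const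
  exact (continuous_subtype_val.comp continuous_snd).mul
    (continuous_const.add ((continuous_P n).comp continuous_fst))

lemma isCompact_L : IsCompact L :=
  (isClosed_K.isCompact).image continuous_mkF

lemma fanTop_mem_L : fanTop ∈ L := by
  refine ⟨(fun _ => false, 0), ?_, rfl⟩
  intro n
  simp

lemma mem_K_of_le {a : ℕ → Bool} {s t : unitInterval} (h : (a, t) ∈ K) (hs : (s : ℝ) ≤ t) :
    (a, s) ∈ K := by
  intro n
  calc (s : ℝ) * (1 + P n a) ≤ (t : ℝ) * (1 + P n a) := by
        apply mul_le_mul_of_nonneg_right hs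
        have := P_nonneg n a; linarith
    _ ≤ 1 := h n

lemma isConnected_L : IsConnected L := by
  apply IsPathConnected.isConnected
  refine ⟨fanTop, fanTop_mem_L, ?_⟩
  rintro y ⟨⟨a, t⟩, hK, rfl⟩
  have hseg : ∀ s : unitInterval, (a, ⟨(s : ℝ) * t, unitInterval.mul_mem s.2 t.2⟩) ∈ K := by
    intro s
    apply mem_K_of_le hK
    simpa using mul_le_of_le_one_left t.2.1 s.2.2
  refine ⟨⟨⟨fun s => mkF (a, ⟨(s : ℝ) * t, unitInterval.mul_mem s.2 t.2⟩), ?_⟩, ?_, ?_⟩, ?_⟩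
  · apply continuous_mkF.comp
    exact (continuous_const.prodMk
      (((continuous_subtype_val).mul continuous_const).subtype_mk _))
  · apply Quotient.sound
    exact Or.inr ⟨Subtype.ext (by simp), rfl⟩
  · show mkF _ = mkF (a, t)
    congr 1
    exact Prod.ext rfl (Subtype.ext (by simp))
  · intro s
    exact ⟨_, hseg s, rfl⟩

lemma nontrivial_L : L.Nontrivial := by
  have h1 : mkF (fun _ => false, 1) ∈ L := by
    refine ⟨_, ?_, rfl⟩
    intro n
    have : P n (fun _ => false) = 0 := by simp [P]
    simp [this]
  refine ⟨_, h1, fanTop, fanTop_mem_L, ?_⟩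
  intro h
  have := Quotient.exact h
  rcases this with h | ⟨h, -⟩
  · exact one_ne_zero (congrArg (fun p : (ℕ → Bool) × unitInterval => (p.2 : ℝ)) h)
  · exact one_ne_zero (congrArg (fun x : unitInterval => (x : ℝ)) h)


/-- the height function on the fan -/
def height : CantorFan → ℝ :=
  Quotient.lift (fun p : (ℕ → Bool) × unitInterval => (p.2 : ℝ)) (by
    rintro p q (rfl | ⟨h1, h2⟩)
    · rfl
    · show ((p.2 : ℝ)) = (q.2 : ℝ); rw [h1, h2])

lemma continuous_height : Continuous height :=
  Continuous.quotient_lift (continuous_subtype_val.comp continuous_snd) _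

@[simp] lemma height_mk (p : (ℕ → Bool) × unitInterval) : height (mkF p) = (p.2 : ℝ) := rfl

/-- the n-th coordinate function, scaled by height -/
def coordFn (n : ℕ) : CantorFan → ℝ :=
  Quotient.lift (fun p : (ℕ → Bool) × unitInterval =>
      (p.2 : ℝ) * (if p.1 n then 1 else 0)) (by
    rintro p q (rfl | ⟨h1, h2⟩)
    · rfl
    · show ((p.2 : ℝ)) * _ = ((q.2 : ℝ)) * _
      rw [h1, h2]; simp)

lemma continuous_coordFn (n : ℕ) : Continuous (coordFn n) := by
  apply Continuous.quotient_lift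
  exact (continuous_subtype_val.comp continuous_snd).mul
    ((continuous_of_discreteTopology (f := fun b : Bool => if b then (1:ℝ) else 0)).comp
      ((continuous_apply n).comp continuous_fst))

@[simp] lemma coordFn_mk (n : ℕ) (p : (ℕ → Bool) × unitInterval) :
    coordFn n (mkF p) = (p.2 : ℝ) * (if p.1 n then 1 else 0) := rfl

/-- Greedy approximation: tail finite sums of `w` are `ε`-dense in `[0, ∞)`. -/
lemma greedy (T ε : ℝ) (hT : 0 ≤ T) (hε : 0 < ε) (n : ℕ) :
    ∃ F : Finset ℕ, (∀ k ∈ F, n ≤ k) ∧ T - ε < ∑ k ∈ F, w k ∧ ∑ k ∈ F, w k ≤ T := by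
  -- choose m ≥ n with w m < ε
  obtain ⟨m₀, hm₀⟩ := exists_nat_gt (1 / ε)
  set m := max n m₀ with hm
  have hwm : w m < ε := by
    have h1 : (1:ℝ)/ε < m₀ := hm₀
    have h2 : (m₀ : ℝ) ≤ m := by exact_mod_cast le_max_right n m₀
    have h3 : (1:ℝ)/ε < (m:ℝ) + 1 := by linarith
    have h4 : (0:ℝ) < (m:ℝ) + 1 := by positivity
    rw [w, div_lt_iff₀ h4]
    calc (1:ℝ) = (1/ε) * ε := by field_simp
      _ < ((m:ℝ)+1) * ε := mul_lt_mul_of_pos_right h3 hε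
      _ = ε * ((m:ℝ)+1) := mul_comm _ _
  set G : ℕ → ℝ := fun j => ∑ k ∈ Finset.Ico m j, w k with hG
  have hGtop : ∃ j, T < G j := by
    have h := Real.tendsto_sum_range_one_div_nat_succ_atTop
    have h2 := h.eventually_gt_atTop (T + ∑ k ∈ Finset.range m, w k)
    obtain ⟨j, hj⟩ := (h2.and (Filter.eventually_ge_atTop m)).exists
    refine ⟨j, ?_⟩
    have hsplit : ∑ k ∈ Finset.range j, w k = (∑ k ∈ Finset.range m, w k) + G j := by
      rw [hG]
      exact (Finset.sum_range_add_sum_Ico _ hj.2).symm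
    have hj1 : T + ∑ k ∈ Finset.range m, w k < ∑ k ∈ Finset.range j, w k := by
      have : ∀ j, ∑ i ∈ Finset.range j, (1:ℝ) / (↑i + 1) = ∑ k ∈ Finset.range j, w k := by
        intro j; rfl
      rw [← this]; exact hj.1
    linarith [hsplit ▸ hj1]
  classical
  obtain ⟨j₀, hj₀, hj₀min⟩ := Nat.lt_wfRel.wf.has_min {j | T < G j} hGtop
  have hGj₀ : T < G j₀ := hj₀
  have hj₀m : m < j₀ := by
    by_contra hc
    push_neg at hc
    have : G j₀ = 0 := by
      rw [hG]
      simp only []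
      rw [Finset.Ico_eq_empty (by omega), Finset.sum_empty]
    rw [this] at hGj₀; linarith
  set j₁ := j₀ - 1 with hj₁
  have hj₁m : m ≤ j₁ := by omega
  have hstep : G j₀ = G j₁ + w j₁ := by
    have : j₀ = j₁ + 1 := by omega
    rw [this, hG]
    exact Finset.sum_Ico_succ_top hj₁m _
  have hGj₁ : G j₁ ≤ T := by
    by_contra hc
    push_neg at hc
    exact absurd (hj₀min j₁ hc) (by intro hn; apply hn; show j₁ < j₀; omega)
  refine ⟨Finset.Ico m j₁, ?_, ?_, hGj₁⟩
  · intro k hk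
    have := (Finset.mem_Ico.1 hk).1
    omega
  · have hw : w j₁ ≤ w m := w_antitone hj₁m
    have : T < G j₁ + w j₁ := by rw [← hstep]; exact hGj₀
    linarith


/-- A continuous `{0,1}`-valued function on an interval is constant. -/
lemma const01 {f : ℝ → ℝ} {l r : ℝ} (hf : ContinuousOn f (Icc l r))
    (hv : ∀ y ∈ Icc l r, f y = 0 ∨ f y = 1) {y z : ℝ}
    (hy : y ∈ Icc l r) (hz : z ∈ Icc l r) : f y = f z := by
  by_contra hne
  have hsub : uIcc y z ⊆ Icc l r := uIcc_subset_Icc hy hz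
  have hiv := intermediate_value_uIcc (hf.mono hsub)
  have hhalf : (1:ℝ)/2 ∈ uIcc (f y) (f z) := by
    rcases hv y hy with h1 | h1 <;> rcases hv z hz with h2 | h2 <;>
      rw [h1, h2] at hne ⊢ <;> first
        | exact absurd rfl hne
        | (rw [Set.mem_uIcc]; norm_num)
  obtain ⟨z', hz', hfz'⟩ := hiv hhalf
  rcases hv z' (hsub hz') with h | h <;> rw [hfz'] at h <;> norm_num at h

lemma isEndpoint_top {b : ℕ → Bool} {τ : unitInterval}
    (hmem : (b, τ) ∈ K) (hpos : 0 < (τ : ℝ))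
    (hmax : ∀ s : unitInterval, mkF (b, s) ∈ L → (s : ℝ) ≤ (τ : ℝ)) :
    IsEndpoint L (mkF (b, τ)) := by
  refine ⟨⟨_, hmem, rfl⟩, ?_⟩
  rintro h hemb hrange ⟨x₀, hx₀⟩
  by_contra hcon
  push_neg at hcon
  obtain ⟨h0, h1⟩ := hcon
  have hx0ne : x₀ ≠ 0 := fun h' => h0 (by rw [← hx₀, h'])
  have hx1ne : x₀ ≠ 1 := fun h' => h1 (by rw [← hx₀, h'])
  set x : ℝ := (x₀ : ℝ) with hxdef
  have hx01 : 0 < x ∧ x < 1 := by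
    constructor
    · rcases lt_or_eq_of_le x₀.2.1 with h' | h'
      · exact h'
      · exact absurd (Subtype.ext h'.symm) hx0ne
    · rcases lt_or_eq_of_le x₀.2.2 with h' | h'
      · exact h'
      · exact absurd (Subtype.ext h') hx1ne
  set H : ℝ → CantorFan := fun y => h (projIcc 0 1 zero_le_one y) with hHdef
  have hHcont : Continuous H := hemb.continuous.comp continuous_projIcc
  have hHx : H x = mkF (b, τ) := by
    rw [hHdef]
    simp only []
    rw [projIcc_of_mem zero_le_one x₀.2]
    rw [← hx₀]
  have hHrange : ∀ y, H y ∈ L := fun y => hrange ⟨_, rfl⟩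
  set U : Set ℝ := Ioo 0 1 ∩ (fun y => height (H y)) ⁻¹' (Ioi 0) with hUdef
  have hUopen : IsOpen U :=
    isOpen_Ioo.inter (isOpen_Ioi.preimage (continuous_height.comp hHcont))
  have hxU : x ∈ U := by
    refine ⟨⟨hx01.1, hx01.2⟩, ?_⟩
    show 0 < height (H x)
    rw [hHx]; exact hpos
  obtain ⟨ε, hεpos, hball⟩ := Metric.isOpen_iff.1 hUopen x hxU
  set δ : ℝ := ε/2 with hδdef
  have hδpos : 0 < δ := by positivity
  set I₀ : Set ℝ := Icc (x - δ) (x + δ) with hI₀def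
  have hI₀U : I₀ ⊆ U := by
    intro y hy
    apply hball
    rw [Metric.mem_ball, Real.dist_eq]
    rw [hI₀def, mem_Icc] at hy
    rw [abs_lt]
    constructor <;> linarith
  have hxI₀ : x ∈ I₀ := by rw [hI₀def, mem_Icc]; constructor <;> linarith
  have hrep : ∀ y : ℝ, ∃ p : (ℕ → Bool) × unitInterval, mkF p = H y := fun y =>
    Quotient.exists_rep (H y)
  have hhpos : ∀ y ∈ I₀, 0 < height (H y) := fun y hy => (hI₀U hy).2
  have hyI : ∀ y ∈ I₀, y ∈ Icc (0:ℝ) 1 := by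
    intro y hy
    have := (hI₀U hy).1
    exact ⟨this.1.le, this.2.le⟩
  -- bit constancy on I₀
  have hbit : ∀ n, ∀ y ∈ I₀, ∀ p : (ℕ → Bool) × unitInterval, mkF p = H y → p.1 n = b n := by
    intro n
    set q : ℝ → ℝ := fun y => coordFn n (H y) / height (H y) with hqdef
    have hqcont : ContinuousOn q I₀ := by
      apply ContinuousOn.div
      · exact ((continuous_coordFn n).comp hHcont).continuousOn
      · exact (continuous_height.comp hHcont).continuousOn
      · exact fun y hy => ne_of_gt (hhpos y hy)
    have hqval : ∀ y ∈ I₀, ∀ p : (ℕ → Bool) × unitInterval, mkF p = H y →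
        q y = (if p.1 n then (1:ℝ) else 0) := by
      intro y hy p hp
      have hp2pos : (0:ℝ) < p.2 := by
        have : height (mkF p) = height (H y) := congrArg height hp
        rw [height_mk] at this
        rw [this]; exact hhpos y hy
      show coordFn n (H y) / height (H y) = _
      rw [← hp, coordFn_mk, height_mk]
      exact mul_div_cancel_left₀ _ (ne_of_gt hp2pos)
    have hq01 : ∀ y ∈ I₀, q y = 0 ∨ q y = 1 := by
      intro y hy
      obtain ⟨p, hp⟩ := hrep y
      rw [hqval y hy p hp]
      by_cases hb : p.1 n <;> simp [hb]
    intro y hy p hp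
    have h1 : q y = (if p.1 n then (1:ℝ) else 0) := hqval y hy p hp
    have h2 : q x = (if b n then (1:ℝ) else 0) := hqval x hxI₀ (b, τ) hHx.symm
    have h3 : q y = q x := const01 hqcont hq01 hy hxI₀
    rw [h1, h2] at h3
    cases hpn : p.1 n <;> cases hbn : b n <;> simp_all
  -- the height function along the arc
  set θ : ℝ → ℝ := fun y => height (H y) with hθdef
  have hθcont : Continuous θ := continuous_height.comp hHcont
  have hθx : θ x = (τ : ℝ) := by
    show height (H x) = _
    rw [hHx, height_mk]
  have hθle : ∀ y ∈ I₀, θ y ≤ (τ : ℝ) := by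
    intro y hy
    obtain ⟨p, hp⟩ := hrep y
    have hb : p.1 = b := funext fun n => hbit n y hy p hp
    have hmk : mkF (b, p.2) = H y := by rw [← hb]; exact hp
    have hmem' : mkF (b, p.2) ∈ L := by rw [hmk]; exact hHrange y
    have hle := hmax p.2 hmem'
    have hθy : θ y = (p.2 : ℝ) := by
      show height (H y) = _
      rw [← hp, height_mk]
    linarith
  have hθinj : ∀ y ∈ I₀, ∀ z ∈ I₀, θ y = θ z → y = z := by
    intro y hy z hz hθe
    obtain ⟨p, hp⟩ := hrep y
    obtain ⟨p', hp'⟩ := hrep z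
    have hby : p.1 = b := funext fun n => hbit n y hy p hp
    have hbz : p'.1 = b := funext fun n => hbit n z hz p' hp'
    have e1 : θ y = (p.2 : ℝ) := by show height (H y) = _; rw [← hp, height_mk]
    have e2 : θ z = (p'.2 : ℝ) := by show height (H z) = _; rw [← hp', height_mk]
    have hpp : p = p' := by
      refine Prod.ext (hby.trans hbz.symm) (Subtype.ext ?_)
      rw [← e1, ← e2, hθe]
    have hHyz : H y = H z := by rw [← hp, ← hp', hpp]
    have := hemb.injective hHyz
    have hy01 := hyI y hy
    have hz01 := hyI z hz
    rw [projIcc_of_mem zero_le_one hy01, projIcc_of_mem zero_le_one hz01] at this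
    exact congrArg Subtype.val this
  -- endpoints of the interval have strictly smaller height
  have hl : x - δ ∈ I₀ := by rw [hI₀def, mem_Icc]; constructor <;> linarith
  have hr : x + δ ∈ I₀ := by rw [hI₀def, mem_Icc]; constructor <;> linarith
  have hlt1 : θ (x - δ) < (τ : ℝ) := by
    rcases lt_or_eq_of_le (hθle _ hl) with h' | h'
    · exact h'
    · exfalso
      have := hθinj _ hl _ hxI₀ (by rw [h', hθx])
      linarith
  have hlt2 : θ (x + δ) < (τ : ℝ) := by
    rcases lt_or_eq_of_le (hθle _ hr) with h' | h'
    · exact h'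
    · exfalso
      have := hθinj _ hr _ hxI₀ (by rw [h', hθx])
      linarith
  set c : ℝ := max (θ (x - δ)) (θ (x + δ)) with hcdef
  have hc : c < (τ : ℝ) := max_lt hlt1 hlt2
  set μ : ℝ := (c + τ) / 2 with hμdef
  have hμ1 : c < μ := by rw [hμdef]; linarith
  have hμ2 : μ < (τ : ℝ) := by rw [hμdef]; linarith
  have hsub1 : Icc (x - δ) x ⊆ I₀ := Icc_subset_Icc le_rfl (by linarith)
  have hsub2 : Icc x (x + δ) ⊆ I₀ := Icc_subset_Icc (by linarith) le_rfl
  obtain ⟨y₁, hy₁, hθy₁⟩ := intermediate_value_Icc (by linarith : x - δ ≤ x)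
    (hθcont.continuousOn)
    (show μ ∈ Icc (θ (x - δ)) (θ x) by
      rw [hθx]
      exact ⟨le_of_lt (lt_of_le_of_lt (le_max_left _ _) hμ1), hμ2.le⟩)
  obtain ⟨y₂, hy₂, hθy₂⟩ := intermediate_value_Icc' (by linarith : x ≤ x + δ)
    (hθcont.continuousOn)
    (show μ ∈ Icc (θ (x + δ)) (θ x) by
      rw [hθx]
      exact ⟨le_of_lt (lt_of_le_of_lt (le_max_right _ _) hμ1), hμ2.le⟩)
  have hy12 : y₁ = y₂ := hθinj _ (hsub1 hy₁) _ (hsub2 hy₂) (by rw [hθy₁, hθy₂])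
  have hy1x : y₁ = x := le_antisymm hy₁.2 (hy12 ▸ hy₂.1)
  rw [hy1x, hθx] at hθy₁
  linarith


lemma inv_close {x y : ℝ} (hx : 1 ≤ x) (hy : 1 ≤ y) : |1/x - 1/y| ≤ |x - y| := by
  have hx0 : x ≠ 0 := by linarith
  have hy0 : y ≠ 0 := by linarith
  have h : 1/x - 1/y = (y - x)/(x*y) := by field_simp
  rw [h, abs_div]
  have hxy : 1 ≤ x*y := by nlinarith
  have habs : |x*y| = x*y := abs_of_pos (by nlinarith)
  rw [habs, abs_sub_comm y x]
  exact div_le_self (abs_nonneg _) hxy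

section Construct

variable (a : ℕ → Bool) (n : ℕ) (F : Finset ℕ)

def bb : ℕ → Bool := fun k => if k < n then a k else decide (k ∈ F)

def Sb : ℝ := P n a + ∑ k ∈ F, w k

lemma sumF_nonneg : 0 ≤ ∑ k ∈ F, w k :=
  Finset.sum_nonneg fun k _ => (w_pos k).le

lemma Sb_nonneg : 0 ≤ Sb a n F := add_nonneg (P_nonneg n a) (sumF_nonneg F)

lemma bb_agree : ∀ k < n, bb a n F k = a k := by
  intro k hk
  simp [bb, hk]

lemma P_eval (hF : ∀ k ∈ F, n ≤ k) {M : ℕ} (hM : n ≤ M) (hFM : ∀ k ∈ F, k < M) :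
    P M (bb a n F) = Sb a n F := by
  have hsplit := Finset.sum_range_add_sum_Ico
    (fun k => if bb a n F k then w k else 0) hM
  have h1 : ∑ k ∈ Finset.range n, (if bb a n F k then w k else 0) = P n a := by
    apply Finset.sum_congr rfl
    intro k hk
    rw [bb_agree a n F k (Finset.mem_range.1 hk)]
  have h2 : ∑ k ∈ Finset.Ico n M, (if bb a n F k then w k else 0) = ∑ k ∈ F, w k := by
    have hFsub : F ⊆ Finset.Ico n M := by
      intro k hk
      exact Finset.mem_Ico.2 ⟨hF k hk, hFM k hk⟩
    rw [← Finset.sum_subset hFsub (fun k hk hknF => by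
      have hkn : ¬ (k < n) := not_lt.2 (Finset.mem_Ico.1 hk).1
      simp [bb, hkn, hknF])]
    apply Finset.sum_congr rfl
    intro k hk
    have hkn : ¬ (k < n) := not_lt.2 (hF k hk)
    simp [bb, hkn, hk]
  show P M (bb a n F) = _
  rw [P, ← hsplit, h1, h2, Sb]

lemma P_le_Sb (hF : ∀ k ∈ F, n ≤ k) (m : ℕ) : P m (bb a n F) ≤ Sb a n F := by
  have h1 : P m (bb a n F) ≤ P (m + n + F.sup id + 1) (bb a n F) :=
    P_mono _ (by omega)
  have h2 : P (m + n + F.sup id + 1) (bb a n F) = Sb a n F := by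
    apply P_eval a n F hF
    · omega
    · intro k hk
      have : k ≤ F.sup id := Finset.le_sup (f := id) hk
      omega
  linarith

def tauval : ℝ := 1 / (1 + Sb a n F)

lemma tauval_pos : 0 < tauval a n F := by
  have := Sb_nonneg a n F
  rw [tauval]
  positivity

lemma tauval_le_one : tauval a n F ≤ 1 := by
  have := Sb_nonneg a n F
  rw [tauval]
  rw [div_le_one (by linarith)]
  linarith

def tau : unitInterval := ⟨tauval a n F, (tauval_pos a n F).le, tauval_le_one a n F⟩

lemma tau_mem_K (hF : ∀ k ∈ F, n ≤ k) : (bb a n F, tau a n F) ∈ K := by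
  intro m
  have hS := Sb_nonneg a n F
  show (tauval a n F) * (1 + P m (bb a n F)) ≤ 1
  have h1 : (tauval a n F) * (1 + P m (bb a n F)) ≤ (tauval a n F) * (1 + Sb a n F) := by
    apply mul_le_mul_of_nonneg_left _ (tauval_pos a n F).le
    linarith [P_le_Sb a n F hF m]
  have h2 : tauval a n F * (1 + Sb a n F) = 1 := by
    rw [tauval]
    field_simp
  linarith

lemma tau_max (hF : ∀ k ∈ F, n ≤ k) :
    ∀ s : unitInterval, mkF (bb a n F, s) ∈ L → (s : ℝ) ≤ tauval a n F := by
  rintro s ⟨⟨c, u⟩, hcu, hmk⟩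
  have hS := Sb_nonneg a n F
  rcases Quotient.exact hmk with heq | ⟨h1, h2⟩
  · -- (c, u) = (bb, s)
    have hc : c = bb a n F := congrArg Prod.fst heq
    have hu : u = s := congrArg Prod.snd heq
    rw [hc, hu] at hcu
    have hPM : P (n + F.sup id + 1) (bb a n F) = Sb a n F := by
      apply P_eval a n F hF
      · omega
      · intro k hk
        have : k ≤ F.sup id := Finset.le_sup (f := id) hk
        omega
    have hsK : (s : ℝ) * (1 + P (n + F.sup id + 1) (bb a n F)) ≤ 1 := hcu _
    rw [hPM] at hsK
    rw [tauval, le_div_iff₀ (by linarith)]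
    linarith
  · have hs0 : s = 0 := h2
    rw [hs0]
    simpa using (tauval_pos a n F).le

lemma tau_isEndpoint (hF : ∀ k ∈ F, n ≤ k) : IsEndpoint L (mkF (bb a n F, tau a n F)) :=
  isEndpoint_top (tau_mem_K a n F hF) (tauval_pos a n F) (tau_max a n F hF)

end Construct

lemma dense_endpoints : L ⊆ closure {e | IsEndpoint L e} := by
  rintro z ⟨⟨a, t⟩, hK, rfl⟩
  rw [mem_closure_iff]
  intro o ho hzo
  have hW : IsOpen (mkF ⁻¹' o) := ho.preimage continuous_mkF
  obtain ⟨V, J, hVopen, hJopen, haV, htJ, hVJ⟩ := isOpen_prod_iff.1 hW a t hzo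
  obtain ⟨Fidx, u, hu, hsubV⟩ := isOpen_pi_iff.1 hVopen a haV
  obtain ⟨ε, hεpos, hballJ⟩ := Metric.isOpen_iff.1 hJopen t htJ
  set n : ℕ := Fidx.sup id + 1 with hn
  have hVmem : ∀ b : ℕ → Bool, (∀ k < n, b k = a k) → b ∈ V := by
    intro b hb
    apply hsubV
    intro i hi
    have hiF : i ∈ Fidx := hi
    have hilt : i < n := by
      have : i ≤ Fidx.sup id := Finset.le_sup (f := id) hiF
      omega
    rw [hb i hilt]
    exact (hu i hiF).2
  have hJmem : ∀ s : unitInterval, |(s : ℝ) - (t : ℝ)| < ε → s ∈ J := by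
    intro s hs
    apply hballJ
    rw [Metric.mem_ball, Subtype.dist_eq, Real.dist_eq]
    exact hs
  have hPn : 0 ≤ P n a := P_nonneg n a
  -- construct the finite tail set F
  have key : ∃ F : Finset ℕ, (∀ k ∈ F, n ≤ k) ∧ |tauval a n F - (t : ℝ)| < ε := by
    rcases eq_or_lt_of_le t.2.1 with ht0 | htpos
    · -- t = 0
      obtain ⟨F, hF, hlo, hhi⟩ := greedy (1/ε) 1 (one_div_nonneg.2 hεpos.le) one_pos n
      refine ⟨F, hF, ?_⟩
      have hsum : 1/ε - 1 < ∑ k ∈ F, w k := hlo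
      have hSpos : 1/ε < 1 + Sb a n F := by
        rw [Sb]; linarith
      have hpos1 : (0:ℝ) < 1 + Sb a n F := by linarith [Sb_nonneg a n F]
      have htv : tauval a n F < ε := by
        rw [tauval, div_lt_iff₀ hpos1]
        have h3 : 1 < (1 + Sb a n F) * ε := (div_lt_iff₀ hεpos).1 hSpos
        linarith [mul_comm ε (1 + Sb a n F)]
      rw [← ht0, sub_zero, abs_of_pos (tauval_pos a n F)]
      exact htv
    · -- t > 0
      set T0 : ℝ := 1/(t : ℝ) - 1 - P n a with hT0
      have hT0nn : 0 ≤ T0 := by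
        have h1 : (t:ℝ) * (1 + P n a) ≤ 1 := hK n
        have h2 : (1 : ℝ) + P n a ≤ 1 / (t:ℝ) := by
          rw [le_div_iff₀ htpos]
          calc (1 + P n a) * (t:ℝ) = (t:ℝ) * (1 + P n a) := mul_comm _ _
            _ ≤ 1 := h1
        rw [hT0]
        linarith
      obtain ⟨F, hF, hlo, hhi⟩ := greedy T0 ε hT0nn hεpos n
      refine ⟨F, hF, ?_⟩
      have ht_eq : (t : ℝ) = 1 / (1 + P n a + T0) := by
        rw [hT0]
        have : 1 + P n a + (1/(t:ℝ) - 1 - P n a) = 1/(t:ℝ) := by ring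
        rw [this, one_div_one_div]
      have h1 : (1:ℝ) ≤ 1 + Sb a n F := by
        have := Sb_nonneg a n F; linarith
      have h2 : (1:ℝ) ≤ 1 + P n a + T0 := by linarith
      calc |tauval a n F - (t:ℝ)|
          = |1/(1 + Sb a n F) - 1/(1 + P n a + T0)| := by rw [tauval, ht_eq]
        _ ≤ |(1 + Sb a n F) - (1 + P n a + T0)| := inv_close h1 h2
        _ = |∑ k ∈ F, w k - T0| := by rw [Sb]; ring_nf
        _ < ε := by rw [abs_lt]; constructor <;> linarith
  obtain ⟨F, hF, hclose⟩ := key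
  refine ⟨mkF (bb a n F, tau a n F), ?_, tau_isEndpoint a n F hF⟩
  apply hVJ
  refine ⟨hVmem _ (bb_agree a n F), hJmem _ hclose⟩

end LelekAux

/-- A Lelek fan exists: there is a nondegenerate subcontinuum of the Cantor fan whose
set of endpoints is dense in it. -/
theorem lelekFan_exists : ∃ L : Set CantorFan, IsLelekFan L :=
  ⟨LelekAux.L, LelekAux.nontrivial_L, LelekAux.isCompact_L, LelekAux.isConnected_L,
    LelekAux.dense_endpoints⟩
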